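/- Let m > 1 be an integer. Then there exists a surjective group homomorphism from the free product ℤ/2 ∗ D₂ onto the direct product ℤ/2 × D_m (a group of order 4m) whose kernel is torsion-free. -/

import Mathlib

open Monoid

/-- The old Mathlib `Monoid.IsTorsionFree` (removed since), with its original meaning. -/
def Monoid.IsTorsionFree (G : Type*) [Monoid G] : Prop :=
  ∀ g : G, g ≠ 1 → ¬IsOfFinOrder g

namespace StmtAux

open Monoid.CoprodI

section Torsion

variable {ι : Type*} [DecidableEq ι] {G : ι → Type*} [∀ i, Group (G i)]
  [∀ i, DecidableEq (G i)]

theorem word_prod_injective : Function.Injective (Word.prod : Word G → CoprodI G) :=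
  fun w₁ w₂ h => by
    have h1 : Word.equiv.symm w₁ = Word.equiv.symm w₂ := h
    exact Word.equiv.symm.injective h1

theorem prod_equiv (x : CoprodI G) : (Word.equiv x).prod = x :=
  Word.equiv.symm_apply_apply x

/-- The inverse of a reduced word. -/
def invWord (w : Word G) : Word G where
  toList := (w.toList.map fun l => ⟨l.1, l.2⁻¹⟩).reverse
  ne_one := by
    intro l hl
    rw [List.mem_reverse, List.mem_map] at hl
    obtain ⟨a, ha, rfl⟩ := hl
    exact inv_ne_one.2 (w.ne_one a ha)
  chain_ne := by
    rw [List.isChain_reverse, List.isChain_map]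
    refine List.IsChain.imp ?_ w.chain_ne
    intro a b h
    exact fun hh => h hh.symm

@[simp] theorem invWord_toList (w : Word G) :
    (invWord w).toList = (w.toList.map fun l => ⟨l.1, l.2⁻¹⟩).reverse := rfl

theorem prod_invWord (w : Word G) : (invWord w).prod = w.prod⁻¹ := by
  rw [Word.prod, Word.prod, invWord_toList, List.map_reverse, List.map_map,
    List.prod_inv_reverse, List.map_map]
  have h2 : ((fun l : Σ i, G i => CoprodI.of l.snd) ∘ fun l => (⟨l.fst, l.snd⁻¹⟩ : Σ i, G i))
      = (fun x => x⁻¹) ∘ fun l : Σ i, G i => CoprodI.of l.snd := by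
    funext l
    simp
  rw [h2]

theorem equiv_inv (x : CoprodI G) : Word.equiv x⁻¹ = invWord (Word.equiv x) := by
  apply word_prod_injective
  rw [prod_equiv, prod_invWord, prod_equiv]

theorem rcons_equivPair (i : ι) (w : Word G) : Word.rcons (Word.equivPair i w) = w := by
  rw [← Word.equivPair_symm]
  exact (Word.equivPair i).symm_apply_apply w

theorem equivPair_of_head {i : ι} {w : Word G} {a : G i}
    (h : w.toList.head? = some ⟨i, a⟩) :
    (Word.equivPair i w).head = a ∧ (Word.equivPair i w).tail.toList = w.toList.tail := by
  have hr := rcons_equivPair i w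
  rw [Word.rcons] at hr
  split_ifs at hr with hh
  · exfalso
    apply (Word.equivPair i w).fstIdx_ne
    rw [Word.fstIdx, hr, h]
    rfl
  · have hlist : (⟨i, (Word.equivPair i w).head⟩ : Σ i, G i) ::
        (Word.equivPair i w).tail.toList = w.toList := congrArg Word.toList hr
    constructor
    · have h2 : w.toList.head? = some ⟨i, (Word.equivPair i w).head⟩ := by
        rw [← hlist]; rfl
      rw [h2] at h
      simpa using h
    · rw [← hlist]
      rfl

theorem smul_head_cancel {i : ι} {w : Word G} {a : G i}
    (h : w.toList.head? = some ⟨i, a⟩) :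
    ((CoprodI.of a⁻¹) • w).toList = w.toList.tail := by
  obtain ⟨h1, h2⟩ := equivPair_of_head h
  rw [Word.of_smul_def, Word.rcons]
  split_ifs with hh
  · exact h2
  · exfalso
    apply hh
    rw [h1, inv_mul_cancel]

theorem equivPair_tail_length (i : ι) (w : Word G) :
    (Word.equivPair i w).tail.toList.length ≤ w.toList.length := by
  have hr := rcons_equivPair i w
  rw [Word.rcons] at hr
  split_ifs at hr with hh
  · rw [hr]
  · have hlist : (⟨i, (Word.equivPair i w).head⟩ : Σ i, G i) ::
        (Word.equivPair i w).tail.toList = w.toList := congrArg Word.toList hr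
    rw [← hlist]
    simp

theorem length_rcons_le (i : ι) (p : Word.Pair G i) :
    (Word.rcons p).toList.length ≤ p.tail.toList.length + 1 := by
  rw [Word.rcons]
  split_ifs with hh
  · omega
  · simp

theorem length_smul_le (i : ι) (m : G i) (w : Word G) :
    ((CoprodI.of m) • w).toList.length ≤ w.toList.length + 1 := by
  rw [Word.of_smul_def]
  refine le_trans (length_rcons_le i _) ?_
  simpa using equivPair_tail_length i w

theorem length_smul_le_of_head {i : ι} (m : G i) (w : Word G)
    (h : Word.fstIdx w = some i) :
    ((CoprodI.of m) • w).toList.length ≤ w.toList.length := by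
  have hr := rcons_equivPair i w
  rw [Word.rcons] at hr
  split_ifs at hr with hh
  · exfalso
    apply (Word.equivPair i w).fstIdx_ne
    rw [hr]; exact h
  · have hlist : (⟨i, (Word.equivPair i w).head⟩ : Σ i, G i) ::
        (Word.equivPair i w).tail.toList = w.toList := congrArg Word.toList hr
    have hlen : (Word.equivPair i w).tail.toList.length + 1 = w.toList.length := by
      rw [← hlist]; simp
    rw [Word.of_smul_def]
    refine le_trans (length_rcons_le i _) ?_
    simp only
    omega

theorem neword_prod_ne_one {i j : ι} (w : NeWord G i j) : w.prod ≠ 1 := by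
  intro h
  have h2 : w.toWord.prod = Word.empty.prod := by
    rw [Word.prod_empty]; exact h
  have := congrArg Word.toList (word_prod_injective h2)
  exact w.toList_ne_nil this

theorem not_isOfFinOrder_of_ne {i j : ι} (w : NeWord G i j) (hij : i ≠ j) :
    ¬ IsOfFinOrder w.prod := by
  intro hfin
  obtain ⟨n, hn, h1⟩ := isOfFinOrder_iff_pow_eq_one.mp hfin
  have key : ∀ k : ℕ, ∃ w' : NeWord G i j, w'.prod = w.prod ^ (k + 1) := by
    intro k
    induction k with
    | zero => exact ⟨w, by simp⟩
    | succ k ih =>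
      obtain ⟨w', hw'⟩ := ih
      refine ⟨NeWord.append w hij.symm w', ?_⟩
      rw [NeWord.append_prod, hw', ← pow_succ']
  obtain ⟨w', hw'⟩ := key (n - 1)
  apply neword_prod_ne_one w'
  rw [hw']
  have : n - 1 + 1 = n := by omega
  rw [this, h1]

theorem getLast?_tail_of_length {α : Type*} (l : List α) (h : 1 < l.length) :
    l.tail.getLast? = l.getLast? := by
  match l, h with
  | a :: b :: t, _ => simp [List.getLast?_cons_cons]

theorem conj_of_finOrder_aux :
    ∀ (n : ℕ) (x : CoprodI G), (Word.equiv x).toList.length ≤ n → IsOfFinOrder x → x ≠ 1 →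
      ∃ (i : ι) (mm : G i) (g : CoprodI G), mm ≠ 1 ∧ x = g * CoprodI.of mm * g⁻¹ := by
  intro n
  induction n with
  | zero =>
    intro x hlen hfin hne
    exfalso
    apply hne
    have hemp : (Word.equiv x) = Word.empty := by
      apply Word.ext
      simpa using List.length_eq_zero_iff.mp (Nat.le_zero.mp hlen)
    rw [← prod_equiv x, hemp, Word.prod_empty]
  | succ n ih =>
    intro x hlen hfin hne
    have hx : (Word.equiv x).prod = x := prod_equiv x
    by_cases hemp : Word.equiv x = Word.empty
    · exfalso; apply hne; rw [← hx, hemp, Word.prod_empty]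
    obtain ⟨i, j, nw, hnw⟩ := NeWord.of_word (Word.equiv x) hemp
    have hhead : (Word.equiv x).toList.head? = some ⟨i, nw.head⟩ := by
      rw [← hnw]; exact nw.toList_head?
    have hlast : (Word.equiv x).toList.getLast? = some ⟨j, nw.last⟩ := by
      rw [← hnw]; exact nw.toList_getLast?
    by_cases hij : i = j
    · subst hij
      by_cases hlen2 : (Word.equiv x).toList.length ≤ 1
      · -- single letter case
        have hne_nil : (Word.equiv x).toList ≠ [] := by
          intro h0
          exact hemp (Word.ext h0)
        have hlen1 : (Word.equiv x).toList.length = 1 := by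
          have := List.length_pos_iff.mpr hne_nil
          omega
        obtain ⟨l, hl⟩ := List.length_eq_one_iff.mp hlen1
        have hl2 : l = ⟨i, nw.head⟩ := by
          have : (Word.equiv x).toList.head? = some l := by rw [hl]; rfl
          rw [hhead] at this
          exact (Option.some_inj.mp this).symm
        refine ⟨i, nw.head, 1, ?_, ?_⟩
        · intro h1
          apply (Word.equiv x).ne_one l (by rw [hl]; simp)
          rw [hl2, h1]
        · rw [← hx, Word.prod, hl, hl2]
          simp
      · -- cyclic reduction
        push_neg at hlen2
        set b := nw.last with hb_def
        -- invWord of (equiv x) represents x⁻¹, first letter ⟨i, b⁻¹⟩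
        have hinvhead : (invWord (Word.equiv x)).toList.head? = some ⟨i, b⁻¹⟩ := by
          rw [invWord_toList, List.head?_reverse, List.getLast?_map, hlast]
          rfl
        -- z := of b • invWord (equiv x) represents (of b) * x⁻¹
        set z := (CoprodI.of b) • invWord (Word.equiv x) with hz_def
        have hztl : z.toList = (invWord (Word.equiv x)).toList.tail := by
          rw [hz_def]
          have := smul_head_cancel (w := invWord (Word.equiv x)) hinvhead
          simpa using this
        have hzprod : z.prod = CoprodI.of b * x⁻¹ := by
          rw [hz_def, Word.prod_smul, prod_invWord, hx]
        have hinvlen : (invWord (Word.equiv x)).toList.length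
            = (Word.equiv x).toList.length := by simp
        have hzlen : z.toList.length = (Word.equiv x).toList.length - 1 := by
          rw [hztl, List.length_tail, hinvlen]
        have hinvlast : (invWord (Word.equiv x)).toList.getLast? = some ⟨i, nw.head⁻¹⟩ := by
          rw [invWord_toList, List.getLast?_reverse, List.head?_map, hhead]
          rfl
        have hzlast : z.toList.getLast? = some ⟨i, nw.head⁻¹⟩ := by
          rw [hztl, getLast?_tail_of_length _ (by omega : 1 < (invWord (Word.equiv x)).toList.length)]
          exact hinvlast
        -- u := invWord z represents x * (of b)⁻¹, first letter ⟨i, nw.head⟩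
        set u := invWord z with hu_def
        have huhead : u.toList.head? = some ⟨i, nw.head⟩ := by
          rw [hu_def, invWord_toList, List.head?_reverse, List.getLast?_map, hzlast]
          simp
        have huprod : u.prod = x * (CoprodI.of b)⁻¹ := by
          rw [hu_def, prod_invWord, hzprod]
          simp
        have hulen : u.toList.length = (Word.equiv x).toList.length - 1 := by
          rw [hu_def]; simpa using hzlen
        -- y := of b * x * (of b)⁻¹, represented by of b • u
        set y := CoprodI.of b * x * (CoprodI.of b)⁻¹ with hy_def
        have hey : Word.equiv y = (CoprodI.of b) • u := by
          apply word_prod_injective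
          rw [prod_equiv, Word.prod_smul, huprod, hy_def, mul_assoc]
        have hylen : (Word.equiv y).toList.length ≤ n := by
          rw [hey]
          have h1 : ((CoprodI.of b) • u).toList.length ≤ u.toList.length :=
            length_smul_le_of_head b u (by rw [Word.fstIdx, huhead]; rfl)
          omega
        have hyfin : IsOfFinOrder y := by
          obtain ⟨k, hk, h1⟩ := isOfFinOrder_iff_pow_eq_one.mp hfin
          refine isOfFinOrder_iff_pow_eq_one.mpr ⟨k, hk, ?_⟩
          rw [hy_def, conj_pow, h1]
          group
        have hyne : y ≠ 1 := by
          intro h1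
          apply hne
          rw [hy_def] at h1
          have := congrArg (fun t => (CoprodI.of b)⁻¹ * t * CoprodI.of b) h1
          simpa [mul_assoc] using this
        obtain ⟨i', m', g, hm', hyy⟩ := ih y hylen hyfin hyne
        refine ⟨i', m', (CoprodI.of b)⁻¹ * g, hm', ?_⟩
        have hx2 : x = (CoprodI.of b)⁻¹ * y * CoprodI.of b := by
          rw [hy_def]; group
        rw [hx2, hyy]
        group
    · exfalso
      apply not_isOfFinOrder_of_ne nw hij
      have : nw.prod = x := by rw [NeWord.prod, hnw, hx]
      rw [this]; exact hfin

theorem conj_of_isOfFinOrder {x : CoprodI G} (hfin : IsOfFinOrder x) (hne : x ≠ 1) :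
    ∃ (i : ι) (mm : G i) (g : CoprodI G), mm ≠ 1 ∧ x = g * CoprodI.of mm * g⁻¹ :=
  conj_of_finOrder_aux _ x le_rfl hfin hne

end Torsion

section Ker

theorem isTorsionFree_ker_of_surviving {A B : Type*} [Group A] [Group B] (f : A →* B)
    (h : ∀ x : A, x ≠ 1 → IsOfFinOrder x → f x ≠ 1) : Monoid.IsTorsionFree f.ker := by
  intro g hg hfin
  have hval : (g : A) ≠ 1 := fun h1 => hg (Subtype.ext h1)
  have hfin' : IsOfFinOrder (g : A) := (f.ker.subtype).isOfFinOrder hfin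
  exact h g hval hfin' (MonoidHom.mem_ker.1 g.2)

end Ker

section Bridge

universe u

/-- `Bool`-indexed family with value `M` at `true` and `N` at `false`. -/
@[reducible] def fam (M N : Type u) : Bool → Type u := fun b => Bool.rec N M b

variable {M N : Type u} [Group M] [Group N]

instance famGroup : ∀ b, Group (fam M N b) := fun b =>
  Bool.rec (inferInstanceAs (Group N)) (inferInstanceAs (Group M)) b

noncomputable instance famDecEq : ∀ b, DecidableEq (fam M N b) := fun _ => Classical.decEq _

/-- The natural map `M ∗ N →* CoprodI (fam M N)`. -/
def toI : Coprod M N →* CoprodI (fam M N) :=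
  Coprod.lift (CoprodI.of (M := fam M N) (i := true)) (CoprodI.of (M := fam M N) (i := false))

/-- The natural map `CoprodI (fam M N) →* M ∗ N`. -/
def fromI : CoprodI (fam M N) →* Coprod M N :=
  CoprodI.lift (fun b =>
    Bool.rec (motive := fun b => fam M N b →* Coprod M N) Coprod.inr Coprod.inl b)

theorem fromI_toI (x : Coprod M N) : fromI (toI x) = x := by
  have h : (fromI (M := M) (N := N)).comp toI = MonoidHom.id _ := by
    apply Coprod.hom_ext
    · apply MonoidHom.ext; intro y
      show fromI (toI (Coprod.inl y)) = Coprod.inl y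
      rw [toI, Coprod.lift_apply_inl, fromI, CoprodI.lift_of]
    · apply MonoidHom.ext; intro y
      show fromI (toI (Coprod.inr y)) = Coprod.inr y
      rw [toI, Coprod.lift_apply_inr, fromI, CoprodI.lift_of]
  exact DFunLike.congr_fun h x

theorem toI_injective : Function.Injective (toI (M := M) (N := N)) :=
  Function.LeftInverse.injective fromI_toI

theorem toI_comp_inl : (toI (M := M) (N := N)).comp Coprod.inl
    = CoprodI.of (M := fam M N) (i := true) := by
  apply MonoidHom.ext; intro x
  simp [toI, Coprod.lift_apply_inl]

theorem toI_comp_inr : (toI (M := M) (N := N)).comp Coprod.inr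
    = CoprodI.of (M := fam M N) (i := false) := by
  apply MonoidHom.ext; intro x
  simp [toI, Coprod.lift_apply_inr]

end Bridge

section Concrete

variable (m : ℕ)

/-- First factor map. -/
def f₁ : Multiplicative (ZMod 2) →* Multiplicative (ZMod 2) × DihedralGroup m where
  toFun x := if x.toAdd = 0 then 1 else (1, DihedralGroup.sr 0)
  map_one' := by simp
  map_mul' a b := by
    have h2 : ∀ c : ZMod 2, c = 0 ∨ c = 1 := by decide
    have h11 : (1 + 1 : ZMod 2) = 0 := by decide
    have h10 : (1 : ZMod 2) ≠ 0 := by decide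
    rcases h2 a.toAdd with ha | ha <;> rcases h2 b.toAdd with hb | hb <;>
      simp [toAdd_mul, ha, hb, h11, h10, Prod.ext_iff, DihedralGroup.one_def, - DihedralGroup.r_zero]

/-- Second factor map. -/
def f₂ : DihedralGroup 2 →* Multiplicative (ZMod 2) × DihedralGroup m where
  toFun x := match x with
    | .r k => (Multiplicative.ofAdd k, 1)
    | .sr k => (Multiplicative.ofAdd k, DihedralGroup.sr 1)
  map_one' := by
    show (Multiplicative.ofAdd (0 : ZMod 2), (1 : DihedralGroup m)) = 1
    simp [Prod.ext_iff]
  map_mul' a b := by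
    have hsub : ∀ a b : ZMod 2, a - b = b + a := by decide
    rcases a with k | k <;> rcases b with l | l <;>
      simp [DihedralGroup.r_mul_r, DihedralGroup.r_mul_sr, DihedralGroup.sr_mul_r,
        DihedralGroup.sr_mul_sr, hsub, Prod.ext_iff, ← ofAdd_add, sub_self,
        DihedralGroup.one_def, add_comm, - DihedralGroup.r_zero]

theorem f₁_injective : Function.Injective (f₁ m) := by
  rw [injective_iff_map_eq_one]
  intro a ha
  have h2 : ∀ c : ZMod 2, c = 0 ∨ c = 1 := by decide
  rcases h2 a.toAdd with h | h
  · have : a = Multiplicative.ofAdd (0 : ZMod 2) := by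
      rw [← h]; rfl
    simpa using this
  · exfalso
    rw [f₁] at ha
    simp only [MonoidHom.coe_mk, OneHom.coe_mk, h] at ha
    rw [if_neg (by decide)] at ha
    have := congrArg Prod.snd ha
    simp [DihedralGroup.one_def, - DihedralGroup.r_zero] at this

theorem f₂_injective : Function.Injective (f₂ m) := by
  rw [injective_iff_map_eq_one]
  intro a ha
  rcases a with k | k
  · have : Multiplicative.ofAdd k = (1 : Multiplicative (ZMod 2)) := congrArg Prod.fst ha
    have hk : k = 0 := by simpa using this
    rw [hk, ← DihedralGroup.one_def]
  · exfalso
    have : DihedralGroup.sr (1 : ZMod m) = 1 := congrArg Prod.snd ha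
    rw [DihedralGroup.one_def] at this
    cases this

/-- The family of maps. -/
def ff : ∀ b, fam (Multiplicative (ZMod 2)) (DihedralGroup 2) b →*
    Multiplicative (ZMod 2) × DihedralGroup m := fun b =>
  Bool.rec (motive := fun b => fam (Multiplicative (ZMod 2)) (DihedralGroup 2) b →* _)
    (f₂ m) (f₁ m) b

theorem ff_injective : ∀ b, Function.Injective (ff m b) := fun b =>
  Bool.rec (motive := fun b => Function.Injective (ff m b)) (f₂_injective m) (f₁_injective m) b

end Concrete

end StmtAux

open Monoid

theorem stmt_15 (m : ℕ) (hm : 1 < m) :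
    ∃ φ : Coprod (Multiplicative (ZMod 2)) (DihedralGroup 2) →*
        Multiplicative (ZMod 2) × DihedralGroup m,
      Function.Surjective φ ∧ Monoid.IsTorsionFree φ.ker := by
  haveI : NeZero m := ⟨by omega⟩
  set φ : Coprod (Multiplicative (ZMod 2)) (DihedralGroup 2) →*
      Multiplicative (ZMod 2) × DihedralGroup m :=
    Coprod.lift (StmtAux.f₁ m) (StmtAux.f₂ m) with hφ
  set φ' : CoprodI (StmtAux.fam (Multiplicative (ZMod 2)) (DihedralGroup 2)) →*
      Multiplicative (ZMod 2) × DihedralGroup m :=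
    CoprodI.lift (StmtAux.ff m) with hφ'
  have hcomp : φ'.comp StmtAux.toI = φ := by
    apply Coprod.hom_ext
    · rw [MonoidHom.comp_assoc, StmtAux.toI_comp_inl]
      apply MonoidHom.ext; intro x
      simp [hφ, hφ', CoprodI.lift_of, Coprod.lift_apply_inl]
      rfl
    · rw [MonoidHom.comp_assoc, StmtAux.toI_comp_inr]
      apply MonoidHom.ext; intro x
      simp [hφ, hφ', CoprodI.lift_of, Coprod.lift_apply_inr]
      rfl
  refine ⟨φ, ?_, ?_⟩
  · -- surjectivity
    intro p
    suffices h : p ∈ φ.range by exact h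
    set S := φ.range with hS
    have hA : ((1 : Multiplicative (ZMod 2)), DihedralGroup.sr (0 : ZMod m)) ∈ S := by
      refine ⟨Coprod.inl (Multiplicative.ofAdd 1), ?_⟩
      rw [hφ, Coprod.lift_apply_inl]
      show (if (Multiplicative.ofAdd (1 : ZMod 2)).toAdd = 0 then
          (1 : Multiplicative (ZMod 2) × DihedralGroup m)
        else ((1 : Multiplicative (ZMod 2)), DihedralGroup.sr 0)) = _
      rw [if_neg (by decide)]
    have hB : (Multiplicative.ofAdd (1 : ZMod 2), DihedralGroup.sr (1 : ZMod m)) ∈ S := by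
      exact ⟨Coprod.inr (DihedralGroup.sr 1), by rw [hφ, Coprod.lift_apply_inr]; rfl⟩
    have hC : (Multiplicative.ofAdd (1 : ZMod 2), (1 : DihedralGroup m)) ∈ S := by
      exact ⟨Coprod.inr (DihedralGroup.r 1), by rw [hφ, Coprod.lift_apply_inr]; rfl⟩
    have hU : ((1 : Multiplicative (ZMod 2)), DihedralGroup.sr (1 : ZMod m)) ∈ S := by
      have := S.mul_mem hC hB
      have heq : (Multiplicative.ofAdd (1 : ZMod 2), (1 : DihedralGroup m)) *
          (Multiplicative.ofAdd (1 : ZMod 2), DihedralGroup.sr (1 : ZMod m))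
          = ((1 : Multiplicative (ZMod 2)), DihedralGroup.sr (1 : ZMod m)) := by
        have h11 : (Multiplicative.ofAdd (1 : ZMod 2)) * Multiplicative.ofAdd 1 = 1 := by
          decide
        rw [Prod.mk_mul_mk, one_mul, h11]
      rwa [heq] at this
    have hrot1 : ((1 : Multiplicative (ZMod 2)), DihedralGroup.r (1 : ZMod m)) ∈ S := by
      have := S.mul_mem hA hU
      have heq : ((1 : Multiplicative (ZMod 2)), DihedralGroup.sr (0 : ZMod m)) *
          ((1 : Multiplicative (ZMod 2)), DihedralGroup.sr (1 : ZMod m))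
          = ((1 : Multiplicative (ZMod 2)), DihedralGroup.r (1 : ZMod m)) := by
        rw [Prod.mk_mul_mk, one_mul, DihedralGroup.sr_mul_sr, sub_zero]
      rwa [heq] at this
    have hrotj : ∀ j : ZMod m, ((1 : Multiplicative (ZMod 2)), DihedralGroup.r j) ∈ S := by
      intro j
      have := S.pow_mem hrot1 j.val
      have heq : ((1 : Multiplicative (ZMod 2)), DihedralGroup.r (1 : ZMod m)) ^ j.val
          = ((1 : Multiplicative (ZMod 2)), DihedralGroup.r j) := by
        rw [Prod.pow_mk, one_pow, DihedralGroup.r_one_pow, ZMod.natCast_rightInverse j]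
      rwa [heq] at this
    have hsrj : ∀ j : ZMod m, ((1 : Multiplicative (ZMod 2)), DihedralGroup.sr j) ∈ S := by
      intro j
      have := S.mul_mem hA (hrotj j)
      have heq : ((1 : Multiplicative (ZMod 2)), DihedralGroup.sr (0 : ZMod m)) *
          ((1 : Multiplicative (ZMod 2)), DihedralGroup.r j)
          = ((1 : Multiplicative (ZMod 2)), DihedralGroup.sr j) := by
        rw [Prod.mk_mul_mk, one_mul, DihedralGroup.sr_mul_r, zero_add]
      rwa [heq] at this
    have hall : ∀ d : DihedralGroup m, ((1 : Multiplicative (ZMod 2)), d) ∈ S := by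
      intro d
      rcases d with j | j
      · exact hrotj j
      · exact hsrj j
    obtain ⟨c, d⟩ := p
    have h2 : ∀ c : Multiplicative (ZMod 2), c = 1 ∨ c = Multiplicative.ofAdd 1 := by decide
    rcases h2 c with rfl | rfl
    · exact hall d
    · have := S.mul_mem hC (hall d)
      have heq : (Multiplicative.ofAdd (1 : ZMod 2), (1 : DihedralGroup m)) *
          ((1 : Multiplicative (ZMod 2)), d) = (Multiplicative.ofAdd (1 : ZMod 2), d) := by
        rw [Prod.mk_mul_mk, mul_one, one_mul]
      rwa [heq] at this
  · -- torsion-free kernel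
    apply StmtAux.isTorsionFree_ker_of_surviving
    intro x hx hfin hφx
    have hyne : StmtAux.toI x ≠ 1 := by
      intro h
      exact hx (StmtAux.toI_injective (by simpa using h))
    have hyfin : IsOfFinOrder (StmtAux.toI x) := (StmtAux.toI).isOfFinOrder hfin
    obtain ⟨b, mm, g, hmm, hconj⟩ := StmtAux.conj_of_isOfFinOrder hyfin hyne
    have h1 : φ' (StmtAux.toI x) = 1 := by
      rw [← hφx]
      exact DFunLike.congr_fun hcomp x
    rw [hconj] at h1
    simp only [map_mul, map_inv] at h1
    have h3 : φ' (CoprodI.of mm) = 1 := by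
      have := congrArg (fun t => (φ' g)⁻¹ * t * (φ' g)) h1
      simpa [mul_assoc] using this
    rw [hφ', CoprodI.lift_of] at h3
    exact hmm (StmtAux.ff_injective m b (h3.trans (map_one _).symm))
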